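/- The joint essential numerical range W_e(x₁,…,x_n) of bounded operators x₁,…,x_n on a separable infinite-dimensional Hilbert space is a convex subset of ℂⁿ, and if each xᵢ is self-adjoint then W_e(x₁,…,x_n) ⊆ ℝⁿ. -/

import Mathlib

open scoped ComplexOrder

/-- A singular state on `B(H)`: a norm-one positive linear functional
vanishing on all compact operators. -/
def IsSingularState {H : Type*} [NormedAddCommGroup H] [InnerProductSpace ℂ H]
    [CompleteSpace H] (f : (H →L[ℂ] H) →L[ℂ] ℂ) : Prop :=
  ‖f‖ = 1 ∧ (∀ a : H →L[ℂ] H, 0 ≤ f (star a * a)) ∧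
    ∀ a : H →L[ℂ] H, IsCompactOperator (⇑a) → f a = 0

/-- The joint essential numerical range of an `n`-tuple of bounded operators. -/
def jointEssNumRange {H : Type*} [NormedAddCommGroup H] [InnerProductSpace ℂ H]
    [CompleteSpace H] {n : ℕ} (x : Fin n → H →L[ℂ] H) :
    Set (EuclideanSpace ℂ (Fin n)) :=
  {v | ∃ f : (H →L[ℂ] H) →L[ℂ] ℂ, IsSingularState f ∧ ∀ i, f (x i) = v i}



section Aux
variable {H : Type*} [NormedAddCommGroup H] [InnerProductSpace ℂ H] [CompleteSpace H]

private lemma aux_key (f : (H →L[ℂ] H) →L[ℂ] ℂ)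
    (hpos : ∀ a : H →L[ℂ] H, 0 ≤ f (star a * a)) (a : H →L[ℂ] H) (lam : ℂ) :
    0 ≤ f (star a * a) + lam * f (star a) + (starRingEnd ℂ) lam * f a
      + ((starRingEnd ℂ) lam * lam) * f 1 := by
  have h := hpos (a + lam • 1)
  have expand : star (a + lam • (1:H→L[ℂ]H)) * (a + lam • 1) =
      star a * a + lam • (star a) + ((starRingEnd ℂ) lam) • a
        + (((starRingEnd ℂ) lam) * lam) • (1:H→L[ℂ]H) := by
    simp only [star_add, star_smul, star_one, mul_add, add_mul, smul_mul_assoc,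
      mul_smul_comm, smul_smul, mul_one, one_mul, RCLike.star_def]
    rw [smul_add, smul_smul, mul_comm lam]
    abel
  rw [expand] at h
  simpa [mul_comm] using h

private lemma aux_im_zero (f : (H →L[ℂ] H) →L[ℂ] ℂ)
    (hpos : ∀ a : H →L[ℂ] H, 0 ≤ f (star a * a)) (a : H →L[ℂ] H) :
    (f (star a * a)).im = 0 :=
  ((Complex.le_def.mp (hpos a)).2).symm

private lemma aux_one_im (f : (H →L[ℂ] H) →L[ℂ] ℂ)
    (hpos : ∀ a : H →L[ℂ] H, 0 ≤ f (star a * a)) : (f 1).im = 0 := by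
  have := aux_im_zero f hpos 1
  simpa using this

private lemma aux_star (f : (H →L[ℂ] H) →L[ℂ] ℂ)
    (hpos : ∀ a : H →L[ℂ] H, 0 ≤ f (star a * a)) (a : H →L[ℂ] H) :
    f (star a) = (starRingEnd ℂ) (f a) := by
  have hF := aux_im_zero f hpos a
  have hU := aux_one_im f hpos
  have h1 := (Complex.le_def.mp (aux_key f hpos a 1)).2
  have hI := (Complex.le_def.mp (aux_key f hpos a Complex.I)).2
  simp only [Complex.add_im, Complex.mul_im, Complex.one_re, Complex.one_im,
    map_one, Complex.zero_im, Complex.conj_im, Complex.conj_re, Complex.I_re,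
    Complex.I_im, hF, hU, map_one] at h1 hI
  apply Complex.ext
  · simp only [Complex.conj_re]
    linarith
  · simp only [Complex.conj_im]
    linarith


private lemma aux_quad (f : (H →L[ℂ] H) →L[ℂ] ℂ)
    (hpos : ∀ a : H →L[ℂ] H, 0 ≤ f (star a * a)) (a : H →L[ℂ] H) (t : ℝ) :
    0 ≤ (f (star a * a)).re + 2*t*‖f a‖^2 + t^2*‖f a‖^2*(f 1).re := by
  have h := aux_key f hpos a ((t:ℂ) * f a)
  rw [aux_star f hpos a] at h
  have hre := (Complex.le_def.mp h).1
  have hU := aux_one_im f hpos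
  have hT2 : ‖f a‖^2 = (f a).re^2 + (f a).im^2 := by
    rw [Complex.sq_norm, Complex.normSq_apply]; ring
  simp only [Complex.add_re, Complex.mul_re, Complex.mul_im, Complex.ofReal_re,
    Complex.ofReal_im, Complex.conj_re, Complex.conj_im, map_mul,
    Complex.conj_ofReal, Complex.zero_re] at hre
  rw [hT2]
  ring_nf at hre ⊢
  nlinarith [hre, hU]

private lemma real_cs {F U c : ℝ} (hF0 : 0 ≤ F) (hU0 : 0 ≤ U) (hc0 : 0 ≤ c)
    (h : ∀ t : ℝ, 0 ≤ F + 2*t*c + t^2*c*U) : c ≤ F * U := by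
  rcases eq_or_lt_of_le hc0 with h0 | hcpos
  · rw [← h0]; exact mul_nonneg hF0 hU0
  · rcases eq_or_lt_of_le hU0 with hU0' | hUpos
    · exfalso
      have h' := h (-(F + c)/(2*c))
      rw [← hU0'] at h'
      have e : 2 * (-(F + c)/(2*c)) * c = -(F + c) := by
        field_simp
      nlinarith [h', e]
    · have h' := mul_nonneg (mul_self_nonneg U) (h (-1/U))
      have e : U*U * (F + 2*(-1/U)*c + (-1/U)^2*c*U) = U*U*F - U*c := by
        field_simp; ring
      rw [e] at h'
      nlinarith [h', hUpos, mul_pos hUpos hUpos]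

private lemma aux_cs (f : (H →L[ℂ] H) →L[ℂ] ℂ)
    (hpos : ∀ a : H →L[ℂ] H, 0 ≤ f (star a * a)) (a : H →L[ℂ] H) :
    ‖f a‖^2 ≤ (f (star a * a)).re * (f 1).re := by
  have hF0 : 0 ≤ (f (star a * a)).re := (Complex.le_def.mp (hpos a)).1
  have hU0 : 0 ≤ (f 1).re := by
    have := (Complex.le_def.mp (hpos 1)).1
    simpa using this
  exact real_cs hF0 hU0 (by positivity) (aux_quad f hpos a)


private lemma aux_one [Nontrivial H] (f : (H →L[ℂ] H) →L[ℂ] ℂ)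
    (hpos : ∀ a : H →L[ℂ] H, 0 ≤ f (star a * a)) (hn : ‖f‖ = 1) : f 1 = 1 := by
  have hU0 : 0 ≤ (f 1).re := by simpa using (Complex.le_def.mp (hpos 1)).1
  have hUim : (f 1).im = 0 := aux_one_im f hpos
  have hb : ∀ a : H →L[ℂ] H, ‖f a‖ ≤ Real.sqrt (f 1).re * ‖a‖ := by
    intro a
    have h1 := aux_cs f hpos a
    have h2 : (f (star a * a)).re ≤ ‖a‖^2 := by
      calc (f (star a * a)).re ≤ ‖f (star a * a)‖ := by
            exact Complex.re_le_norm _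
        _ ≤ ‖f‖ * ‖star a * a‖ := f.le_opNorm _
        _ = ‖a‖^2 := by rw [hn, CStarRing.norm_star_mul_self, one_mul, sq]
    calc ‖f a‖ = Real.sqrt (‖f a‖^2) := (Real.sqrt_sq (norm_nonneg _)).symm
      _ ≤ Real.sqrt ((f 1).re * ‖a‖^2) := Real.sqrt_le_sqrt (by nlinarith [h1, h2, hU0])
      _ = Real.sqrt (f 1).re * ‖a‖ := by
          rw [Real.sqrt_mul hU0, Real.sqrt_sq (norm_nonneg _)]
  have hle : ‖f‖ ≤ Real.sqrt (f 1).re := f.opNorm_le_bound (Real.sqrt_nonneg _) hb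
  have h1le : 1 ≤ (f 1).re := by nlinarith [Real.sq_sqrt hU0, hle, hn]
  have hfle : ‖f (1 : H →L[ℂ] H)‖ ≤ 1 := by
    calc ‖f (1 : H →L[ℂ] H)‖ ≤ ‖f‖ * ‖(1 : H →L[ℂ] H)‖ := f.le_opNorm 1
      _ = 1 := by rw [hn, norm_one, mul_one]
  have hre_le : (f 1).re ≤ 1 :=
    le_trans (by exact Complex.re_le_norm _) hfle
  apply Complex.ext
  · simpa using le_antisymm hre_le h1le
  · simpa using hUim

private lemma aux_decomp (a : H →L[ℂ] H) (ha : IsSelfAdjoint a) :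
    ∃ b c : H →L[ℂ] H, a = star b * b - star c * c := by
  refine ⟨CFC.sqrt (a⁺), CFC.sqrt (a⁻), ?_⟩
  have h1 : (0:H →L[ℂ] H) ≤ CFC.sqrt (a⁺) := CFC.sqrt_nonneg _
  have h2 : (0:H →L[ℂ] H) ≤ CFC.sqrt (a⁻) := CFC.sqrt_nonneg _
  rw [h1.isSelfAdjoint.star_eq, h2.isSelfAdjoint.star_eq,
    CFC.sqrt_mul_sqrt_self _ (CFC.posPart_nonneg a),
    CFC.sqrt_mul_sqrt_self _ (CFC.negPart_nonneg a), CFC.posPart_sub_negPart a ha]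

end Aux

theorem stmt8 {H : Type*} [NormedAddCommGroup H] [InnerProductSpace ℂ H]
    [CompleteSpace H] [TopologicalSpace.SeparableSpace H]
    (hH : ¬ FiniteDimensional ℂ H)
    (n : ℕ) (x : Fin n → H →L[ℂ] H) :
    Convex ℝ (jointEssNumRange x) ∧
      ((∀ i, IsSelfAdjoint (x i)) →
        ∀ v ∈ jointEssNumRange x, ∀ i, (v i).im = 0) := by
  have hnt : Nontrivial H := by
    by_contra hcon
    rw [not_nontrivial_iff_subsingleton] at hcon
    exact hH inferInstance
  constructor
  · rintro v ⟨f, ⟨hfn, hfpos, hfc⟩, hfv⟩ w ⟨g, ⟨hgn, hgpos, hgc⟩, hgw⟩ t s ht hs hts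
    have hf1 : f 1 = 1 := aux_one f hfpos hfn
    have hg1 : g 1 = 1 := aux_one g hgpos hgn
    have happ : (t • f + s • g) 1 = 1 := by
      simp only [ContinuousLinearMap.add_apply, ContinuousLinearMap.coe_smul',
        Pi.smul_apply, hf1, hg1, Complex.real_smul, mul_one]
      exact_mod_cast hts
    refine ⟨t • f + s • g, ⟨?_, ?_, ?_⟩, ?_⟩
    · apply le_antisymm
      · calc ‖t • f + s • g‖ ≤ ‖t • f‖ + ‖s • g‖ := norm_add_le _ _
          _ = t * ‖f‖ + s * ‖g‖ := by
              rw [norm_smul t f, norm_smul s g, Real.norm_of_nonneg ht,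
                Real.norm_of_nonneg hs]
          _ = 1 := by rw [hfn, hgn]; linarith
      · have h := (t • f + s • g).le_opNorm 1
        rw [happ, norm_one, norm_one, mul_one] at h
        exact h
    · intro a
      have h1 := Complex.le_def.mp (hfpos a)
      have h2 := Complex.le_def.mp (hgpos a)
      simp only [Complex.zero_re, Complex.zero_im] at h1 h2
      rw [Complex.le_def]
      simp only [ContinuousLinearMap.add_apply, ContinuousLinearMap.coe_smul',
        Pi.smul_apply, Complex.real_smul, Complex.add_re, Complex.add_im,
        Complex.mul_re, Complex.mul_im, Complex.ofReal_re, Complex.ofReal_im,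
        Complex.zero_re, Complex.zero_im]
      constructor
      · nlinarith [h1.1, h2.1, ht, hs]
      · rw [← h1.2, ← h2.2]; ring
    · intro a ha
      simp [ContinuousLinearMap.add_apply, hfc a ha, hgc a ha]
    · intro i
      simp only [ContinuousLinearMap.add_apply, ContinuousLinearMap.coe_smul',
        Pi.smul_apply, hfv i, hgw i, PiLp.add_apply, PiLp.smul_apply]
  · rintro hsa v ⟨f, ⟨hfn, hfpos, hfc⟩, hfv⟩ i
    rw [← hfv i]
    obtain ⟨b, c, habc⟩ := aux_decomp (x i) (hsa i)
    rw [habc, map_sub]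
    have h1 := aux_im_zero f hfpos b
    have h2 := aux_im_zero f hfpos c
    simp [Complex.sub_im, h1, h2]
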